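/- Let A₀ = [[0, 1],[-2√(-y₁), k√(-y₁)]] with y₁ < 0 and k < 0 (so that A₀ is Hurwitz), and let N be a constant symmetric 2×2 matrix. Then the unique symmetric solution X = [[v₁₁,v₁₂],[v₁₂,v₂₂]] of A₀X + XA₀ᵀ + N = 0 satisfies v₁₂ = -N₁₁/2; moreover, if N₂₂ ≠ 0, then v₁₁(y₁) = Θ(1/(-y₁)) and v₂₂(y₁) = Θ(1/√(-y₁)) as y₁ → 0⁻. -/

import Mathlib

open Matrix Filter Topology

/-- `f = Θ(g)` (in absolute value) as `y → 0⁻`. -/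
def IsThetaNearZeroMinus (f g : ℝ → ℝ) : Prop :=
  ∃ c C : ℝ, 0 < c ∧ 0 < C ∧
    ∀ᶠ y in nhdsWithin 0 (Set.Iio 0), c * g y ≤ |f y| ∧ |f y| ≤ C * g y

/-- A quadratic polynomial with nonzero constant term is comparable to its
constant term near `0`. -/
lemma quad_abs_bounds (α β γ : ℝ) (hα : α ≠ 0) :
    ∃ δ : ℝ, 0 < δ ∧ ∀ s : ℝ, 0 ≤ s → s ≤ δ →
      |α| / 2 ≤ |α + β * s + γ * (s * s)| ∧ |α + β * s + γ * (s * s)| ≤ 2 * |α| := by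
  have hαpos : 0 < |α| := abs_pos.mpr hα
  refine ⟨min 1 (|α| / (2 * (|β| + |γ|) + 2)), by positivity, fun s hs0 hsδ => ?_⟩
  have hs1 : s ≤ 1 := le_trans hsδ (min_le_left _ _)
  have hs2 : s ≤ |α| / (2 * (|β| + |γ|) + 2) := le_trans hsδ (min_le_right _ _)
  have hβ : 0 ≤ |β| := abs_nonneg _
  have hγ : 0 ≤ |γ| := abs_nonneg _
  have ht : |β * s + γ * (s * s)| ≤ |α| / 2 := by
    have h1 : |β * s + γ * (s * s)| ≤ |β| * s + |γ| * (s * s) := by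
      calc |β * s + γ * (s * s)| ≤ |β * s| + |γ * (s * s)| := abs_add_le _ _
        _ = |β| * s + |γ| * (s * s) := by
            rw [abs_mul, abs_mul, abs_of_nonneg hs0, abs_of_nonneg (mul_nonneg hs0 hs0)]
    have hss : s * s ≤ s := by nlinarith
    have h2 : |β| * s + |γ| * (s * s) ≤ (|β| + |γ|) * s := by
      nlinarith [mul_le_mul_of_nonneg_left hss hγ]
    have hden : 0 < 2 * (|β| + |γ|) + 2 := by positivity
    have h4 : s * (2 * (|β| + |γ|) + 2) ≤ |α| := (le_div_iff₀ hden).mp hs2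
    have h3 : (|β| + |γ|) * s ≤ |α| / 2 := by nlinarith
    linarith
  constructor
  · have : |α| ≤ |α + β * s + γ * (s * s)| + |β * s + γ * (s * s)| := by
      calc |α| = |(α + β * s + γ * (s * s)) + -(β * s + γ * (s * s))| := by ring_nf
        _ ≤ |α + β * s + γ * (s * s)| + |-(β * s + γ * (s * s))| := abs_add_le _ _
        _ = |α + β * s + γ * (s * s)| + |β * s + γ * (s * s)| := by rw [abs_neg]
    linarith
  · calc |α + β * s + γ * (s * s)| = |α + (β * s + γ * (s * s))| := by ring_nf
      _ ≤ |α| + |β * s + γ * (s * s)| := abs_add_le _ _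
      _ ≤ 2 * |α| := by linarith

/-- For `A₀(y₁) = [[0,1],[-2√(-y₁), k√(-y₁)]]` with `y₁ < 0`, `k < 0` (Hurwitz), and
constant symmetric noise matrix `N`, any symmetric solution `X` of
`A₀X + XA₀ᵀ + N = 0` has off-diagonal entry `v₁₂ = -N₁₁/2`; moreover if `N₂₂ ≠ 0`
then `v₁₁(y₁) = Θ(1/(-y₁))` and `v₂₂(y₁) = Θ(1/√(-y₁))` as `y₁ → 0⁻`. -/
theorem bogdanov_takens_covariance_scaling (k N₁₁ N₁₂ N₂₂ : ℝ) (hk : k < 0)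
    (V₁₁ V₁₂ V₂₂ : ℝ → ℝ)
    (hsol : ∀ y₁ : ℝ, y₁ < 0 →
      (!![0, 1; -2 * Real.sqrt (-y₁), k * Real.sqrt (-y₁)] : Matrix (Fin 2) (Fin 2) ℝ) *
          !![V₁₁ y₁, V₁₂ y₁; V₁₂ y₁, V₂₂ y₁] +
        !![V₁₁ y₁, V₁₂ y₁; V₁₂ y₁, V₂₂ y₁] *
          (!![0, 1; -2 * Real.sqrt (-y₁), k * Real.sqrt (-y₁)] : Matrix (Fin 2) (Fin 2) ℝ)ᵀ +
        !![N₁₁, N₁₂; N₁₂, N₂₂] = 0) :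
    (∀ y₁ : ℝ, y₁ < 0 → V₁₂ y₁ = -N₁₁ / 2) ∧
    (N₂₂ ≠ 0 →
      IsThetaNearZeroMinus V₁₁ (fun y₁ => 1 / (-y₁)) ∧
      IsThetaNearZeroMinus V₂₂ (fun y₁ => 1 / Real.sqrt (-y₁))) := by
  have hk0 : k ≠ 0 := ne_of_lt hk
  -- extract the scalar equations and solve them
  have main : ∀ y : ℝ, y < 0 →
      V₁₂ y = -N₁₁ / 2 ∧
      Real.sqrt (-y) * V₂₂ y
        = -N₂₂ / (2 * k) + (-N₁₁ / k) * Real.sqrt (-y) ∧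
      (Real.sqrt (-y) * Real.sqrt (-y)) * V₁₁ y
        = -N₂₂ / (4 * k) + (N₁₂ / 2 - N₁₁ / (2 * k)) * Real.sqrt (-y)
          + (-(k * N₁₁) / 4) * (Real.sqrt (-y) * Real.sqrt (-y)) := by
    intro y hy
    have h := hsol y hy
    set s := Real.sqrt (-y) with hsdef
    have hspos : 0 < s := Real.sqrt_pos.mpr (by linarith)
    have hsne : s ≠ 0 := ne_of_gt hspos
    have h00 := congrFun (congrFun h 0) 0
    have h10 := congrFun (congrFun h 1) 0
    have h11 := congrFun (congrFun h 1) 1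
    simp [Matrix.mul_apply, Fin.sum_univ_two, Matrix.transpose_apply,
      Matrix.vecHead, Matrix.vecTail, Matrix.vecMul, dotProduct] at h00 h10 h11
    have hb : V₁₂ y = -N₁₁ / 2 := by linarith
    rw [hb] at h10 h11
    have hc : s * V₂₂ y = -N₂₂ / (2 * k) + (-N₁₁ / k) * s := by
      field_simp
      linear_combination h11
    refine ⟨hb, hc, ?_⟩
    have h10' : 2 * s * V₁₁ y = k * s * (-N₁₁ / 2) + V₂₂ y + N₁₂ := by linarith
    linear_combination (s / 2) * h10' + (1 / 2) * hc
  refine ⟨fun y hy => (main y hy).1, fun hN => ?_⟩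
  -- asymptotics
  constructor
  · -- V₁₁ = Θ(1/(-y))
    have hα : (-N₂₂ / (4 * k)) ≠ 0 :=
      div_ne_zero (neg_ne_zero.mpr hN) (mul_ne_zero (by norm_num) hk0)
    obtain ⟨δ, hδ, hbound⟩ := quad_abs_bounds (-N₂₂ / (4 * k)) (N₁₂ / 2 - N₁₁ / (2 * k))
      (-(k * N₁₁) / 4) hα
    refine ⟨|(-N₂₂ / (4 * k))| / 2, 2 * |(-N₂₂ / (4 * k))|, by positivity, by positivity, ?_⟩
    refine Filter.eventually_of_mem (Ioo_mem_nhdsLT_of_mem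
      (show (0:ℝ) ∈ Set.Ioc (-(δ*δ)) 0 from ⟨by nlinarith, le_refl 0⟩)) ?_
    intro y hy
    obtain ⟨hy1, hy2⟩ := hy
    set s := Real.sqrt (-y) with hsdef
    have hspos : 0 < s := Real.sqrt_pos.mpr (by linarith)
    have hss : s * s = -y := Real.mul_self_sqrt (by linarith)
    have hsδ : s ≤ δ := by
      rw [hsdef]
      have : Real.sqrt (-y) ≤ Real.sqrt (δ*δ) := Real.sqrt_le_sqrt (by linarith)
      rwa [Real.sqrt_mul_self (le_of_lt hδ)] at this
    obtain ⟨hlow, hhigh⟩ := hbound s (le_of_lt hspos) hsδ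
    have heq := (main y hy2).2.2
    have hym : (0:ℝ) < -y := by linarith
    have hyne : (-y) ≠ 0 := ne_of_gt hym
    have hinv : (0:ℝ) ≤ 1 / (-y) := (one_div_pos.mpr hym).le
    have h2 : (-y) * V₁₁ y = (-N₂₂ / (4 * k)) + (N₁₂ / 2 - N₁₁ / (2 * k)) * s
        + (-(k * N₁₁) / 4) * (s * s) := by rw [← hss]; exact heq
    have h1 : V₁₁ y = ((-N₂₂ / (4 * k)) + (N₁₂ / 2 - N₁₁ / (2 * k)) * s
        + (-(k * N₁₁) / 4) * (s * s)) * (1 / (-y)) := by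
      rw [mul_one_div, eq_div_iff hyne, mul_comm]; exact h2
    have habs : |V₁₁ y| = |(-N₂₂ / (4 * k)) + (N₁₂ / 2 - N₁₁ / (2 * k)) * s
        + (-(k * N₁₁) / 4) * (s * s)| * (1 / (-y)) := by
      rw [h1, abs_mul, abs_of_nonneg hinv]
    rw [habs]
    exact ⟨mul_le_mul_of_nonneg_right hlow hinv, mul_le_mul_of_nonneg_right hhigh hinv⟩
  · -- V₂₂ = Θ(1/√(-y))
    have hα : (-N₂₂ / (2 * k)) ≠ 0 :=
      div_ne_zero (neg_ne_zero.mpr hN) (mul_ne_zero (by norm_num) hk0)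
    obtain ⟨δ, hδ, hbound⟩ := quad_abs_bounds (-N₂₂ / (2 * k)) (-N₁₁ / k) 0 hα
    refine ⟨|(-N₂₂ / (2 * k))| / 2, 2 * |(-N₂₂ / (2 * k))|, by positivity, by positivity, ?_⟩
    refine Filter.eventually_of_mem (Ioo_mem_nhdsLT_of_mem
      (show (0:ℝ) ∈ Set.Ioc (-(δ*δ)) 0 from ⟨by nlinarith, le_refl 0⟩)) ?_
    intro y hy
    obtain ⟨hy1, hy2⟩ := hy
    set s := Real.sqrt (-y) with hsdef
    have hspos : 0 < s := Real.sqrt_pos.mpr (by linarith)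
    have hss : s * s = -y := Real.mul_self_sqrt (by linarith)
    have hsδ : s ≤ δ := by
      rw [hsdef]
      have : Real.sqrt (-y) ≤ Real.sqrt (δ*δ) := Real.sqrt_le_sqrt (by linarith)
      rwa [Real.sqrt_mul_self (le_of_lt hδ)] at this
    obtain ⟨hlow, hhigh⟩ := hbound s (le_of_lt hspos) hsδ
    have heq := (main y hy2).2.1
    have hsne : s ≠ 0 := ne_of_gt hspos
    have hinv : (0:ℝ) ≤ 1 / s := (one_div_pos.mpr hspos).le
    have h2 : s * V₂₂ y = (-N₂₂ / (2 * k)) + (-N₁₁ / k) * s + 0 * (s * s) := by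
      rw [heq]; ring
    have h1 : V₂₂ y = ((-N₂₂ / (2 * k)) + (-N₁₁ / k) * s + 0 * (s * s)) * (1 / s) := by
      rw [mul_one_div, eq_div_iff hsne, mul_comm]; exact h2
    have habs : |V₂₂ y| = |(-N₂₂ / (2 * k)) + (-N₁₁ / k) * s + 0 * (s * s)| * (1 / s) := by
      rw [h1, abs_mul, abs_of_nonneg hinv]
    rw [habs]
    exact ⟨mul_le_mul_of_nonneg_right hlow hinv, mul_le_mul_of_nonneg_right hhigh hinv⟩
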